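/- Let G be a connected negative definite graph whose plumbed manifold is a rational homology sphere, n ∈ 𝒩 a node and e an end of a leg of n with fraction α_e/β_e. Then D_e = α_e E_e^* - E_n^* is an effective integral cycle supported exactly on the leg containing e, with m_{u_e}(D_e) = 1 at the neighbour u_e of n on this leg. Moreover the family (D_e)_{e ∈ ℰ} is a ℤ-basis of the kernel of the restriction map V_Z → V_Z^𝒩, where V_Z = ℤ⟨E_v^* : v ∈ 𝒩 ∪ ℰ⟩ ∩ L. -/

import Mathlib

/-- The degree (valency) of a vertex in the graph with intersection matrix `I`. -/
def degG {V : Type*} [Fintype V] [DecidableEq V] (I : Matrix V V ℤ) (v : V) : ℕ :=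
  (Finset.univ.filter fun w => w ≠ v ∧ I v w ≠ 0).card

set_option linter.unusedSectionVars false
set_option linter.unusedVariables false
set_option maxHeartbeats 1600000

namespace Stmt17Aux
open Finset Matrix

variable {V : Type*} [Fintype V] [DecidableEq V]


lemma qform_eq (I : Matrix V V ℤ) (y : V → ℚ) :
    ∑ v, ∑ w, y v * (I v w : ℚ) * y w = ∑ v, y v * ∑ w, (I v w : ℚ) * y w := by
  refine Finset.sum_congr rfl fun v _ => ?_
  rw [Finset.mul_sum]
  exact Finset.sum_congr rfl fun w _ => by ring

lemma qf_zero (I : Matrix V V ℤ)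
    (hnegdef : ∀ x : V → ℚ, x ≠ 0 → ∑ v, ∑ w, x v * (I v w : ℚ) * x w < 0)
    (y : V → ℚ) (h : ∀ v, y v * (∑ w, (I v w : ℚ) * y w) = 0) : y = 0 := by
  by_contra hy
  have h1 := hnegdef y hy
  rw [qform_eq] at h1
  have h2 : ∑ v, y v * ∑ w, (I v w : ℚ) * y w = 0 := Finset.sum_eq_zero fun v _ => h v
  rw [h2] at h1
  exact lt_irrefl _ h1

lemma nbr_subset_deg (I : Matrix V V ℤ) (v : V) (S : Finset V)
    (hS : S ⊆ Finset.univ.filter fun w => w ≠ v ∧ I v w ≠ 0) : S.card ≤ degG I v :=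
  Finset.card_le_card hS

lemma three_le_deg (I : Matrix V V ℤ) {v a b c : V}
    (ha : a ≠ v) (ha' : I v a ≠ 0) (hb : b ≠ v) (hb' : I v b ≠ 0)
    (hc : c ≠ v) (hc' : I v c ≠ 0) (hab : a ≠ b) (hac : a ≠ c) (hbc : b ≠ c) :
    3 ≤ degG I v := by
  have hsub : ({a, b, c} : Finset V) ⊆ Finset.univ.filter fun w => w ≠ v ∧ I v w ≠ 0 := by
    intro x hx
    simp only [Finset.mem_insert, Finset.mem_singleton] at hx
    simp only [Finset.mem_filter, Finset.mem_univ, true_and]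
    rcases hx with rfl | rfl | rfl <;> exact ⟨by assumption, by assumption⟩
  have hcard : ({a, b, c} : Finset V).card = 3 := by
    rw [Finset.card_insert_of_notMem (by simp [hab, hac]),
      Finset.card_insert_of_notMem (by simp [hbc]), Finset.card_singleton]
  calc 3 = ({a, b, c} : Finset V).card := hcard.symm
    _ ≤ _ := nbr_subset_deg I v _ hsub

lemma two_le_deg (I : Matrix V V ℤ) {v a b : V}
    (ha : a ≠ v) (ha' : I v a ≠ 0) (hb : b ≠ v) (hb' : I v b ≠ 0) (hab : a ≠ b) :
    2 ≤ degG I v := by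
  have hsub : ({a, b} : Finset V) ⊆ Finset.univ.filter fun w => w ≠ v ∧ I v w ≠ 0 := by
    intro x hx
    simp only [Finset.mem_insert, Finset.mem_singleton] at hx
    simp only [Finset.mem_filter, Finset.mem_univ, true_and]
    rcases hx with rfl | rfl <;> exact ⟨by assumption, by assumption⟩
  have hcard : ({a, b} : Finset V).card = 2 := by
    rw [Finset.card_insert_of_notMem (by simp [hab]), Finset.card_singleton]
  calc 2 = ({a, b} : Finset V).card := hcard.symm
    _ ≤ _ := nbr_subset_deg I v _ hsub

lemma nbr_deg1 (I : Matrix V V ℤ) {v a c : V} (hdeg : degG I v = 1)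
    (ha : a ≠ v) (ha' : I v a ≠ 0) (hc : c ≠ v) (hc' : I v c ≠ 0) : c = a := by
  by_contra hne
  have := two_le_deg I ha ha' hc hc' (Ne.symm hne)
  omega

lemma nbr_deg2 (I : Matrix V V ℤ) {v a b c : V} (hdeg : degG I v = 2)
    (ha : a ≠ v) (ha' : I v a ≠ 0) (hb : b ≠ v) (hb' : I v b ≠ 0) (hab : a ≠ b)
    (hc : c ≠ v) (hc' : I v c ≠ 0) : c = a ∨ c = b := by
  by_contra hne
  push_neg at hne
  have := three_le_deg I ha ha' hb hb' hc hc' hab (fun h => hne.1 h.symm) (fun h => hne.2 h.symm)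
  omega


open Finset Matrix

lemma posdef_det_pos : ∀ (m : ℕ) (M : Matrix (Fin m) (Fin m) ℚ),
    (∀ i j, M i j = M j i) →
    (∀ x : Fin m → ℚ, x ≠ 0 → 0 < ∑ i, ∑ j, x i * M i j * x j) →
    0 < M.det
  | 0, M, _, _ => by simp
  | (m+1), M, hsymm, hpos => by
    have hA : 0 < M 0 0 := by
      set ey : Fin (m+1) → ℚ := Pi.single 0 1 with hey
      have h1 := hpos ey (by
        intro h
        have := congrFun h 0
        simp [hey] at this)
      have h2 : ∑ i : Fin (m+1), ∑ j : Fin (m+1), ey i * M i j * ey j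
          = M 0 0 := by
        rw [Finset.sum_eq_single (0 : Fin (m+1))]
        · rw [Finset.sum_eq_single (0 : Fin (m+1))]
          · simp [hey]
          · intro j _ hj; simp [hey, Pi.single_eq_of_ne hj]
          · simp
        · intro i _ hi
          rw [Finset.sum_eq_zero]
          intro j _
          simp [hey, Pi.single_eq_of_ne hi]
        · simp
      rw [h2] at h1; exact h1
    have hA0 : M 0 0 ≠ 0 := ne_of_gt hA
    set N : Matrix (Fin m) (Fin m) ℚ :=
      Matrix.of (fun i j => M i.succ j.succ - M i.succ 0 * M 0 j.succ / M 0 0) with hN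
    have hNsymm : ∀ i j, N i j = N j i := by
      intro i j
      simp only [hN, Matrix.of_apply]
      rw [hsymm i.succ j.succ, hsymm i.succ 0, hsymm j.succ 0]
      ring
    have hNpos : ∀ x : Fin m → ℚ, x ≠ 0 → 0 < ∑ i, ∑ j, x i * N i j * x j := by
      intro x hx
      set b : ℚ := ∑ j, M 0 j.succ * x j with hb
      set z : Fin (m+1) → ℚ := Fin.cons (-(b / M 0 0)) x with hz
      have hzne : z ≠ 0 := by
        intro h
        apply hx
        funext i
        have := congrFun h i.succ
        simpa [hz] using this
      have hQ := hpos z hzne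
      have key : ∑ i, ∑ j, z i * M i j * z j = ∑ i, ∑ j, x i * N i j * x j := by
        have e0 : ∑ j, z 0 * M 0 j * z j = z 0 * M 0 0 * z 0 + z 0 * b := by
          rw [Fin.sum_univ_succ]
          simp only [hz, Fin.cons_zero, Fin.cons_succ]
          rw [hb, Finset.mul_sum]
          congr 1
          exact Finset.sum_congr rfl fun j _ => by ring
        have e1 : ∀ i : Fin m, ∑ j, z i.succ * M i.succ j * z j
            = x i * M i.succ 0 * z 0 + ∑ j, x i * M i.succ j.succ * x j := by
          intro i
          rw [Fin.sum_univ_succ]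
          simp only [hz, Fin.cons_zero, Fin.cons_succ]
        have e2 : ∑ i : Fin m, x i * M i.succ 0 = b := by
          rw [hb]
          exact Finset.sum_congr rfl fun i _ => by rw [hsymm i.succ 0]; ring
        have eN : ∑ i, ∑ j, x i * N i j * x j
            = (∑ i, ∑ j, x i * M i.succ j.succ * x j) - b * b / M 0 0 := by
          have : ∀ i j, x i * N i j * x j
              = x i * M i.succ j.succ * x j - (x i * M i.succ 0) * (M 0 j.succ * x j) / M 0 0 := by
            intro i j
            simp only [hN, Matrix.of_apply]
            field_simp
          simp_rw [this, Finset.sum_sub_distrib]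
          congr 1
          calc ∑ i, ∑ j, x i * M i.succ 0 * (M 0 j.succ * x j) / M 0 0
              = ∑ i, x i * M i.succ 0 * b / M 0 0 := by
                refine Finset.sum_congr rfl fun i _ => ?_
                rw [← Finset.sum_div, ← Finset.mul_sum, ← hb]
            _ = b * b / M 0 0 := by
                rw [← Finset.sum_div, ← Finset.sum_mul, e2]
        rw [Fin.sum_univ_succ, e0, eN]
        have e3 : ∑ i : Fin m, ∑ j, z i.succ * M i.succ j * z j
            = b * z 0 + ∑ i, ∑ j, x i * M i.succ j.succ * x j := by
          rw [Finset.sum_congr rfl fun i _ => e1 i, Finset.sum_add_distrib]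
          congr 1
          rw [← e2, Finset.sum_mul]
        rw [e3]
        have hz0 : z 0 = -(b / M 0 0) := by simp [hz]
        rw [hz0]
        field_simp
        ring
      rw [key] at hQ
      exact hQ
    have hNdet : 0 < N.det := posdef_det_pos m N hNsymm hNpos
    -- the elimination matrix
    set E : Matrix (Fin (m+1)) (Fin (m+1)) ℚ :=
      Matrix.of (fun i j => if i = j then 1 else if j = 0 then -(M i 0) / M 0 0 else 0) with hE
    have hEdet : E.det = 1 := by
      rw [Matrix.det_of_lowerTriangular E (by
        intro i j hij
        have hij' : i < j := hij
        have hj0 : j ≠ 0 := by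
          intro h
          rw [h] at hij'
          exact absurd hij' (by simp)
        simp only [hE, Matrix.of_apply]
        rw [if_neg (ne_of_lt hij'), if_neg hj0])]
      simp [hE]
    have hEM0 : ∀ j, (E * M) 0 j = M 0 j := by
      intro j
      rw [Matrix.mul_apply]
      rw [Finset.sum_eq_single 0]
      · simp [hE]
      · intro k _ hk
        simp only [hE, Matrix.of_apply]
        rw [if_neg (fun h => hk h.symm), if_neg hk]
        exact zero_mul _
      · simp
    have hEMs : ∀ (i : Fin m) (j : Fin (m+1)),
        (E * M) i.succ j = M i.succ j - M i.succ 0 * M 0 j / M 0 0 := by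
      intro i j
      rw [Matrix.mul_apply]
      rw [Finset.sum_eq_add_of_mem i.succ 0 (Finset.mem_univ _) (Finset.mem_univ _)
        (Fin.succ_ne_zero i) (by
          intro k _ hk
          simp only [hE, Matrix.of_apply]
          rw [if_neg (fun h => hk.1 h.symm), if_neg hk.2]
          exact zero_mul _)]
      simp [hE, Fin.succ_ne_zero i]
      field_simp
      ring
    have hsub : (E * M).submatrix Fin.succ Fin.succ = N := by
      ext i j
      simp only [Matrix.submatrix_apply, hN, Matrix.of_apply]
      rw [hEMs]
    have hdetEM : (E * M).det = M 0 0 * N.det := by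
      rw [Matrix.det_succ_column_zero]
      rw [Finset.sum_eq_single 0]
      · rw [hEM0, Fin.succAbove_zero, hsub]
        simp
      · intro i _ hi
        obtain ⟨i', rfl⟩ := Fin.exists_succ_eq.mpr hi
        have hz : (E * M) i'.succ 0 = 0 := by
          rw [hEMs]
          field_simp
          ring
        rw [hz]
        ring
      · simp
    have hMdet : M.det = M 0 0 * N.det := by
      rw [← hdetEM, Matrix.det_mul, hEdet, one_mul]
    rw [hMdet]
    exact mul_pos hA hNdet


open Finset Matrix

variable {V : Type*} [Fintype V] [DecidableEq V]

/-- The chain matrix of size `k` along vertices `P 1, …, P k` (negated). -/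
def chainM (I : Matrix V V ℤ) (P : ℕ → V) (k : ℕ) : Matrix (Fin k) (Fin k) ℚ :=
  Matrix.of fun i j => -((I (P (i.1+1)) (P (j.1+1)) : ℤ) : ℚ)

lemma chain_pos (I : Matrix V V ℤ)
    (hnegdef : ∀ x : V → ℚ, x ≠ 0 → ∑ v, ∑ w, x v * (I v w : ℚ) * x w < 0)
    (P : ℕ → V) (k : ℕ)
    (hinj : ∀ i j : ℕ, 1 ≤ i → i ≤ k → 1 ≤ j → j ≤ k → P i = P j → i = j)
    (x : Fin k → ℚ) (hx : x ≠ 0) :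
    0 < ∑ i, ∑ j, x i * chainM I P k i j * x j := by
  set X : V → ℚ := fun v => ∑ i : Fin k, if v = P (i.1+1) then x i else 0 with hX
  have hXP : ∀ i : Fin k, X (P (i.1+1)) = x i := by
    intro i
    rw [hX]
    simp only []
    rw [Finset.sum_eq_single i]
    · simp
    · intro j _ hj
      rw [if_neg]
      intro h
      apply hj
      have := hinj (j.1+1) (i.1+1) (by omega) (by omega) (by omega) (by omega) h.symm
      exact Fin.ext (by omega)
    · simp
  have hXne : X ≠ 0 := by
    intro h
    apply hx
    funext i
    have := congrFun h (P (i.1+1))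
    rw [hXP i] at this
    exact this
  have key : ∑ v, ∑ w, X v * (I v w : ℚ) * X w
      = ∑ i : Fin k, ∑ j : Fin k, x i * ((I (P (i.1+1)) (P (j.1+1)) : ℤ) : ℚ) * x j := by
    have step1 : ∀ v, ∑ w, X v * (I v w : ℚ) * X w
        = ∑ j : Fin k, X v * (I v (P (j.1+1)) : ℚ) * x j := by
      intro v
      calc ∑ w, X v * (I v w : ℚ) * X w
          = ∑ w, ∑ j : Fin k, (if w = P (j.1+1) then X v * (I v w : ℚ) * x j else 0) := by
            refine Finset.sum_congr rfl fun w _ => ?_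
            rw [hX]
            simp only []
            rw [Finset.mul_sum]
            refine Finset.sum_congr rfl fun j _ => ?_
            split <;> simp
        _ = ∑ j : Fin k, ∑ w, (if w = P (j.1+1) then X v * (I v w : ℚ) * x j else 0) :=
            Finset.sum_comm
        _ = ∑ j : Fin k, X v * (I v (P (j.1+1)) : ℚ) * x j := by
            refine Finset.sum_congr rfl fun j _ => ?_
            rw [Finset.sum_ite_eq' Finset.univ (P (j.1+1)) (fun w => X v * (I v w : ℚ) * x j)]
            simp
    calc ∑ v, ∑ w, X v * (I v w : ℚ) * X w
        = ∑ v, ∑ j : Fin k, X v * (I v (P (j.1+1)) : ℚ) * x j :=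
          Finset.sum_congr rfl fun v _ => step1 v
      _ = ∑ j : Fin k, ∑ v, X v * (I v (P (j.1+1)) : ℚ) * x j := Finset.sum_comm
      _ = ∑ j : Fin k, ∑ i : Fin k, x i * ((I (P (i.1+1)) (P (j.1+1)) : ℤ) : ℚ) * x j := by
          refine Finset.sum_congr rfl fun j _ => ?_
          calc ∑ v, X v * (I v (P (j.1+1)) : ℚ) * x j
              = ∑ v, ∑ i : Fin k, (if v = P (i.1+1) then x i * (I v (P (j.1+1)) : ℚ) * x j else 0) := by
                refine Finset.sum_congr rfl fun v _ => ?_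
                rw [hX]
                simp only []
                rw [Finset.sum_mul, Finset.sum_mul]
                refine Finset.sum_congr rfl fun i _ => ?_
                split <;> simp
            _ = ∑ i : Fin k, ∑ v, (if v = P (i.1+1) then x i * (I v (P (j.1+1)) : ℚ) * x j else 0) :=
                Finset.sum_comm
            _ = ∑ i : Fin k, x i * ((I (P (i.1+1)) (P (j.1+1)) : ℤ) : ℚ) * x j := by
                refine Finset.sum_congr rfl fun i _ => ?_
                rw [Finset.sum_ite_eq' Finset.univ (P (i.1+1))
                  (fun v => x i * (I v (P (j.1+1)) : ℚ) * x j)]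
                simp
      _ = ∑ i : Fin k, ∑ j : Fin k, x i * ((I (P (i.1+1)) (P (j.1+1)) : ℤ) : ℚ) * x j :=
          Finset.sum_comm
  have hneg := hnegdef X hXne
  rw [key] at hneg
  have : ∑ i, ∑ j, x i * chainM I P k i j * x j
      = -∑ i : Fin k, ∑ j : Fin k, x i * ((I (P (i.1+1)) (P (j.1+1)) : ℤ) : ℚ) * x j := by
    rw [← Finset.sum_neg_distrib]
    refine Finset.sum_congr rfl fun i _ => ?_
    rw [← Finset.sum_neg_distrib]
    refine Finset.sum_congr rfl fun j _ => ?_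
    simp [chainM]
  rw [this]
  linarith


open Finset Matrix

variable {V : Type*} [Fintype V] [DecidableEq V]

lemma chain_rec (I : Matrix V V ℤ) (P : ℕ → V) (k : ℕ)
    (h0 : ∀ i j : ℕ, 1 ≤ i → i ≤ k+2 → 1 ≤ j → j ≤ k+2 → j + 2 ≤ i → I (P i) (P j) = 0)
    (h0' : ∀ i j : ℕ, 1 ≤ i → i ≤ k+2 → 1 ≤ j → j ≤ k+2 → j + 2 ≤ i → I (P j) (P i) = 0)
    (h1a : I (P (k+2)) (P (k+1)) = 1) (h1b : I (P (k+1)) (P (k+2)) = 1) :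
    (chainM I P (k+2)).det
      = -((I (P (k+2)) (P (k+2)) : ℤ) : ℚ) * (chainM I P (k+1)).det - (chainM I P k).det := by
  have hsub1 : (chainM I P (k+2)).submatrix Fin.castSucc Fin.castSucc = chainM I P (k+1) := by
    ext i j
    simp [chainM]
  set a : Fin (k+2) := ⟨k, by omega⟩ with ha
  set b : Fin (k+2) := Fin.last (k+1) with hb
  have hdet := Matrix.det_succ_row (chainM I P (k+2)) (Fin.last (k+1))
  rw [Finset.sum_eq_add_of_mem a b (Finset.mem_univ _) (Finset.mem_univ _)
    (Fin.ne_of_val_ne (show k ≠ k+1 by omega))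
    (by
      intro c _ hc
      have hc1 : c.1 ≠ k := fun h => hc.1 (by rw [ha]; exact Fin.ext h)
      have hc2 : c.1 ≠ k+1 := fun h => hc.2 (by rw [hb]; exact Fin.ext h)
      have hcz : I (P (k+2)) (P (c.1+1)) = 0 := by
        refine h0 (k+2) (c.1+1) (by omega) (by omega) (by omega) (by omega) ?_
        have := c.2
        omega
      have : chainM I P (k+2) (Fin.last (k+1)) c = 0 := by
        simp [chainM, Fin.val_last, hcz]
      rw [this]
      ring)] at hdet
  -- term at `b`
  have hbterm : (-1 : ℚ) ^ ((Fin.last (k+1) : ℕ) + (b : ℕ)) * chainM I P (k+2) (Fin.last (k+1)) b *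
      ((chainM I P (k+2)).submatrix (Fin.last (k+1)).succAbove b.succAbove).det
      = -((I (P (k+2)) (P (k+2)) : ℤ) : ℚ) * (chainM I P (k+1)).det := by
    rw [hb]
    rw [Fin.succAbove_last, hsub1]
    simp only [Fin.val_last]
    have hpow : (-1 : ℚ) ^ ((k+1) + (k+1)) = 1 := Even.neg_one_pow ⟨k+1, rfl⟩
    rw [hpow, one_mul]
    congr 1
  -- term at `a`
  have haterm : (-1 : ℚ) ^ ((Fin.last (k+1) : ℕ) + (a : ℕ)) * chainM I P (k+2) (Fin.last (k+1)) a *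
      ((chainM I P (k+2)).submatrix (Fin.last (k+1)).succAbove a.succAbove).det
      = -(chainM I P k).det := by
    rw [Fin.succAbove_last]
    set B := (chainM I P (k+2)).submatrix Fin.castSucc a.succAbove with hB
    have hBdet : B.det = -(chainM I P k).det := by
      have hd := Matrix.det_succ_column B (Fin.last k)
      rw [Finset.sum_eq_single (Fin.last k) (by
        intro c _ hc
        have hc1 : c.1 < k := by
          have := c.2
          have : c.1 ≠ k := fun h => hc (Fin.ext (by simp [Fin.val_last, h]))
          omega
        have hBc : B c (Fin.last k) = 0 := by
          rw [hB]
          have hsA : (a.succAbove (Fin.last k) : ℕ) = k+1 := by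
            rw [Fin.succAbove_of_le_castSucc a (Fin.last k)
              (by rw [Fin.le_def]; simp [ha, Fin.val_last])]
            simp [Fin.val_last]
          have : I (P ((Fin.castSucc c).1 + 1)) (P ((a.succAbove (Fin.last k)).1 + 1)) = 0 := by
            rw [hsA]
            exact h0' (k+2) (c.1+1) (by omega) (by omega) (by omega) (by omega) (by omega)
          simp only [Matrix.submatrix_apply, chainM, Matrix.of_apply]
          rw [this]
          simp
        rw [hBc]
        ring) (by simp)] at hd
      rw [hd]
      have hsA : (a.succAbove (Fin.last k) : ℕ) = k+1 := by
        rw [Fin.succAbove_of_le_castSucc a (Fin.last k)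
          (by rw [Fin.le_def]; simp [ha, Fin.val_last])]
        simp [Fin.val_last]
      have hent : B (Fin.last k) (Fin.last k) = -1 := by
        rw [hB]
        simp only [Matrix.submatrix_apply, chainM, Matrix.of_apply]
        have : I (P ((Fin.castSucc (Fin.last k)).1 + 1)) (P ((a.succAbove (Fin.last k)).1 + 1)) = 1 := by
          rw [hsA]
          simp only [Fin.coe_castSucc, Fin.val_last]
          exact h1b
        rw [this]
        simp
      have hsub2 : B.submatrix (Fin.last k).succAbove (Fin.last k).succAbove = chainM I P k := by
        rw [Fin.succAbove_last, hB]
        ext i j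
        have hsA2 : (a.succAbove (Fin.castSucc j) : ℕ) = j.1 := by
          rw [Fin.succAbove_of_castSucc_lt]
          · simp
          · rw [ha]
            simp [Fin.lt_def]
        simp only [Matrix.submatrix_apply, chainM, Matrix.of_apply, Fin.coe_castSucc]
        rw [hsA2]
      rw [hsub2, hent]
      have hpow : (-1 : ℚ) ^ ((Fin.last k : ℕ) + (Fin.last k : ℕ)) = 1 :=
        Even.neg_one_pow ⟨(Fin.last k : ℕ), rfl⟩
      rw [hpow]
      ring
    rw [hBdet]
    have hent2 : chainM I P (k+2) (Fin.last (k+1)) a = -1 := by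
      simp only [chainM, Matrix.of_apply, Fin.val_last, ha]
      rw [h1a]
      simp
    rw [hent2]
    have hpow : (-1 : ℚ) ^ ((Fin.last (k+1) : ℕ) + (a : ℕ)) = -1 := by
      simp only [Fin.val_last]
      exact Odd.neg_one_pow ⟨k, (by omega : k + 1 + k = 2 * k + 1)⟩
    rw [hpow]
    ring
  rw [haterm, hbterm] at hdet
  rw [hdet]
  ring


section Leg
variable {V : Type*} [Fintype V] [DecidableEq V]
variable (I : Matrix V V ℤ) (e nd : V) (s : ℕ) (P : ℕ → V)

/-- injectivity of the leg path on `{0,…,s}` -/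
lemma Pinj (hinjF : Function.Injective fun j : Fin (s+1) => P j)
    {j k : ℕ} (hj : j ≤ s) (hk : k ≤ s) (h : P j = P k) : j = k := by
  have := hinjF (a₁ := ⟨j, by omega⟩) (a₂ := ⟨k, by omega⟩) h
  exact congrArg Fin.val this

/-- classification of neighbours of interior leg vertices and the end -/
lemma nbrP (hsym : I.IsSymm)
    (hdege : degG I e = 1)
    (hs1 : 1 ≤ s) (hps : P s = e)
    (hdeg2 : ∀ j, 1 ≤ j → j < s → degG I (P j) = 2)
    (hadj : ∀ j < s, I (P j) (P (j+1)) = 1)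
    (hinjF : Function.Injective fun j : Fin (s+1) => P j) :
    ∀ j w, 1 ≤ j → j ≤ s → w ≠ P j → I (P j) w ≠ 0 →
      (w = P (j-1) ∨ (j < s ∧ w = P (j+1))) := by
  intro j w hj1 hjs hw hIw
  have hadj' : ∀ j < s, I (P (j+1)) (P j) = 1 := fun j hj => by
    rw [hsym.apply]; exact hadj j hj
  rcases Nat.lt_or_ge j s with hjlt | hjge
  · -- interior vertex, degree 2
    have hdeg := hdeg2 j hj1 hjlt
    have hne1 : P (j-1) ≠ P j := by
      intro h
      have := Pinj s P hinjF (by omega) (by omega) h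
      omega
    have hne2 : P (j+1) ≠ P j := by
      intro h
      have := Pinj s P hinjF (by omega) (by omega) h
      omega
    have hI1 : I (P j) (P (j-1)) ≠ 0 := by
      have h1 : I (P (j-1)) (P (j-1+1)) = 1 := hadj (j-1) (by omega)
      have hj11 : j - 1 + 1 = j := by omega
      rw [hj11] at h1
      rw [hsym.apply]
      rw [h1]
      exact one_ne_zero
    have hI2 : I (P j) (P (j+1)) ≠ 0 := by
      rw [hadj j hjlt]
      exact one_ne_zero
    have hne12 : P (j-1) ≠ P (j+1) := by
      intro h
      have := Pinj s P hinjF (by omega) (by omega) h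
      omega
    rcases nbr_deg2 I hdeg hne1 hI1 hne2 hI2 hne12 hw hIw with h | h
    · exact Or.inl h
    · exact Or.inr ⟨hjlt, h⟩
  · -- the end vertex, degree 1
    have hjeq : j = s := by omega
    have hdeg : degG I (P j) = 1 := by rw [hjeq, hps]; exact hdege
    have hne1 : P (j-1) ≠ P j := by
      intro h
      have := Pinj s P hinjF (by omega) (by omega) h
      omega
    have hI1 : I (P j) (P (j-1)) ≠ 0 := by
      have h1 : I (P (j-1)) (P (j-1+1)) = 1 := hadj (j-1) (by omega)
      have hj11 : j - 1 + 1 = j := by omega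
      rw [hj11] at h1
      rw [hsym.apply, h1]
      exact one_ne_zero
    exact Or.inl (nbr_deg1 I hdeg hne1 hI1 hw hIw)

/-- non-adjacency of distant leg vertices -/
lemma chain_zero (hsym : I.IsSymm)
    (hdege : degG I e = 1)
    (hs1 : 1 ≤ s) (hps : P s = e)
    (hdeg2 : ∀ j, 1 ≤ j → j < s → degG I (P j) = 2)
    (hadj : ∀ j < s, I (P j) (P (j+1)) = 1)
    (hinjF : Function.Injective fun j : Fin (s+1) => P j) :
    ∀ i j, i ≤ s → 1 ≤ j → j ≤ s → i ≠ j → i ≠ j + 1 → i + 1 ≠ j →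
      I (P j) (P i) = 0 := by
  intro i j hi hj1 hjs h1 h2 h3
  by_contra hIw
  have hPne : P i ≠ P j := by
    intro h
    exact h1 (Pinj s P hinjF hi hjs h)
  rcases nbrP I e s P hsym hdege hs1 hps hdeg2 hadj hinjF j (P i) hj1 hjs hPne hIw with h | h
  · have := Pinj s P hinjF hi (by omega) h
    omega
  · have := Pinj s P hinjF hi (by omega) h.2
    omega

end Leg

lemma part1 {V : Type*} [Fintype V] [DecidableEq V]
    (I : Matrix V V ℤ) (hsym : I.IsSymm)
    (hnegdef : ∀ x : V → ℚ, x ≠ 0 → ∑ v, ∑ w, x v * (I v w : ℚ) * x w < 0)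
    (Estar : V → V → ℚ)
    (hEstar : ∀ v w, ∑ u, (I w u : ℚ) * Estar v u = if v = w then -1 else 0)
    (e nd : V) (s : ℕ) (P : ℕ → V)
    (hdege : degG I e = 1)
    (hs1 : 1 ≤ s) (hp0 : P 0 = nd) (hps : P s = e) (hnd3 : 3 ≤ degG I nd)
    (hdeg2 : ∀ j, 1 ≤ j → j < s → degG I (P j) = 2)
    (hadj : ∀ j < s, I (P j) (P (j+1)) = 1)
    (hinjF : Function.Injective fun j : Fin (s+1) => P j)
    (α : ℚ)
    (hαv : α = |Matrix.det (Matrix.of fun i j : Fin s =>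
      ((I (P (i.1 + 1)) (P (j.1 + 1)) : ℤ) : ℚ))|)
    (Dv : V → ℚ) (hDv : Dv = fun v => α * Estar e v - Estar nd v) :
    (∀ v, ∃ m : ℤ, Dv v = (m : ℚ)) ∧
    (∀ v, (∃ j, 1 ≤ j ∧ j ≤ s ∧ v = P j) → 0 < Dv v) ∧
    (∀ v, (¬ ∃ j, 1 ≤ j ∧ j ≤ s ∧ v = P j) → Dv v = 0) ∧
    Dv (P 1) = 1 ∧ 0 < α := by
  have hPinj : ∀ {j k : ℕ}, j ≤ s → k ≤ s → P j = P k → j = k :=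
    fun {j k} hj hk h => Pinj s P hinjF hj hk h
  have hzero : ∀ i j, i ≤ s → 1 ≤ j → j ≤ s → i ≠ j → i ≠ j + 1 → i + 1 ≠ j →
      I (P j) (P i) = 0 := chain_zero I e s P hsym hdege hs1 hps hdeg2 hadj hinjF
  have hzero' : ∀ i j, i ≤ s → 1 ≤ j → j ≤ s → i ≠ j → i ≠ j + 1 → i + 1 ≠ j →
      I (P i) (P j) = 0 := fun i j h1 h2 h3 h4 h5 h6 =>
    (hsym.apply (P i) (P j)).symm.trans (hzero i j h1 h2 h3 h4 h5 h6)
  have hadj2 : ∀ j < s, I (P (j+1)) (P j) = 1 := fun j hj =>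
    (hsym.apply (P j) (P (j+1))).trans (hadj j hj)
  -- chain determinants
  have hChsym : ∀ k, ∀ i j : Fin k, chainM I P k i j = chainM I P k j i := by
    intro k i j
    have h := hsym.apply (P (i.1+1)) (P (j.1+1))
    simp only [chainM, Matrix.of_apply]
    rw [show I (P (i.1+1)) (P (j.1+1)) = I (P (j.1+1)) (P (i.1+1)) from h.symm]
  have hChpos : ∀ k, k ≤ s → 0 < (chainM I P k).det := by
    intro k hk
    refine posdef_det_pos k _ (hChsym k) ?_
    intro x hx
    refine chain_pos I hnegdef P k ?_ x hx
    intro i j h1 h2 h3 h4 h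
    exact hPinj (le_trans h2 hk) (le_trans h4 hk) h
  have hChint : ∀ k, ∃ m : ℤ, (chainM I P k).det = (m : ℚ) := by
    intro k
    refine ⟨(Matrix.of fun i j : Fin k => -(I (P (i.1+1)) (P (j.1+1)))).det, ?_⟩
    have h1 : chainM I P k
        = (Int.castRingHom ℚ).mapMatrix
            (Matrix.of fun i j : Fin k => -(I (P (i.1+1)) (P (j.1+1)))) := by
      ext i j
      simp [chainM]
    rw [h1, ← RingHom.map_det]
    simp
  have hrec : ∀ k, k + 2 ≤ s → (chainM I P (k+2)).det
      = -((I (P (k+2)) (P (k+2)) : ℤ) : ℚ) * (chainM I P (k+1)).det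
        - (chainM I P k).det := by
    intro k hk
    refine chain_rec I P k ?_ ?_ (hadj2 (k+1) (by omega)) (hadj (k+1) (by omega))
    · intro i j h1 h2 h3 h4 h5
      exact hzero' i j (by omega) h3 (by omega) (by omega) (by omega) (by omega)
    · intro i j h1 h2 h3 h4 h5
      exact hzero i j (by omega) h3 (by omega) (by omega) (by omega) (by omega)
  have hα' : α = (chainM I P s).det := by
    rw [hαv]
    have hM : (Matrix.of fun i j : Fin s => ((I (P (i.1+1)) (P (j.1+1)) : ℤ) : ℚ))
        = -(chainM I P s) := by
      ext i j
      simp [chainM]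
    rw [hM, Matrix.det_neg, abs_mul, abs_pow, abs_neg, abs_one, one_pow, one_mul,
      abs_of_pos (hChpos s le_rfl)]
  have hαpos : 0 < α := by rw [hα']; exact hChpos s le_rfl
  -- the candidate cycle supported on the leg
  set d : ℕ → ℚ := fun j => if j = 0 then 0 else (chainM I P (j-1)).det with hd
  set y : V → ℚ := fun v => ∑ j ∈ Finset.Icc 1 s, if v = P j then d j else 0 with hy
  have hyP : ∀ j, 1 ≤ j → j ≤ s → y (P j) = d j := by
    intro j h1 h2
    simp only [hy]
    rw [Finset.sum_eq_single j]
    · rw [if_pos rfl]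
    · intro k hk hkj
      have hk' := Finset.mem_Icc.mp hk
      rw [if_neg]
      intro h
      exact hkj (hPinj h2 hk'.2 h).symm
    · intro h
      exact absurd (Finset.mem_Icc.mpr ⟨h1, h2⟩) h
  have hyoff : ∀ v, (∀ j, 1 ≤ j → j ≤ s → v ≠ P j) → y v = 0 := by
    intro v hv
    simp only [hy]
    refine Finset.sum_eq_zero fun j hj => ?_
    have hj' := Finset.mem_Icc.mp hj
    rw [if_neg (hv j hj'.1 hj'.2)]
  have hd1 : d 1 = 1 := by
    simp [hd]
  have sumform : ∀ w, ∑ u, (I w u : ℚ) * y u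
      = ∑ j ∈ Finset.Icc 1 s, (I w (P j) : ℚ) * d j := by
    intro w
    simp only [hy]
    calc ∑ u, (I w u : ℚ) * ∑ j ∈ Finset.Icc 1 s, (if u = P j then d j else 0)
        = ∑ u, ∑ j ∈ Finset.Icc 1 s, (if u = P j then (I w u : ℚ) * d j else 0) := by
          refine Finset.sum_congr rfl fun u _ => ?_
          rw [Finset.mul_sum]
          refine Finset.sum_congr rfl fun j _ => ?_
          split <;> simp
      _ = ∑ j ∈ Finset.Icc 1 s, ∑ u, (if u = P j then (I w u : ℚ) * d j else 0) :=
          Finset.sum_comm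
      _ = ∑ j ∈ Finset.Icc 1 s, (I w (P j) : ℚ) * d j := by
          refine Finset.sum_congr rfl fun j _ => ?_
          rw [Finset.sum_ite_eq' Finset.univ (P j) fun u => (I w u : ℚ) * d j]
          simp
  have Hy : ∀ w, ∑ u, (I w u : ℚ) * y u
      = (if nd = w then 1 else 0) - α * (if e = w then 1 else 0) := by
    intro w
    rw [sumform w]
    by_cases hw : ∃ t, t ≤ s ∧ w = P t
    · obtain ⟨t, hts, rfl⟩ := hw
      rcases Nat.eq_zero_or_pos t with ht0 | ht1
      · -- t = 0 : the node
        subst ht0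
        have hsum : ∑ j ∈ Finset.Icc 1 s, (I (P 0) (P j) : ℚ) * d j = 1 := by
          rw [Finset.sum_eq_single 1]
          · rw [show I (P 0) (P 1) = 1 from hadj 0 (by omega), hd1]
            norm_num
          · intro j hj hj1
            have hj' := Finset.mem_Icc.mp hj
            rw [hzero' 0 j (by omega) hj'.1 hj'.2 (by omega) (by omega) (by omega)]
            norm_num
          · intro h
            exact absurd (Finset.mem_Icc.mpr ⟨le_refl 1, hs1⟩) h
        rw [hsum, if_pos hp0.symm, if_neg (by
          intro h
          rw [← hps] at h
          have := hPinj le_rfl (by omega) h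
          omega)]
        ring
      · rcases Nat.lt_or_ge t s with htlt | htge
        · -- interior vertex
          have hifnd : (if nd = P t then (1:ℚ) else 0) = 0 := by
            rw [if_neg]
            intro h
            rw [← hp0] at h
            have := hPinj (by omega) (by omega) h
            omega
          have hife : (if e = P t then (1:ℚ) else 0) = 0 := by
            rw [if_neg]
            intro h
            rw [← hps] at h
            have := hPinj le_rfl (by omega) h
            omega
          rw [hifnd, hife]
          rcases Nat.lt_or_ge t 2 with ht1' | ht2
          · -- t = 1 < s
            have ht : t = 1 := by omega
            subst ht
            have hsum : ∑ j ∈ Finset.Icc 1 s, (I (P 1) (P j) : ℚ) * d j = 0 := by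
              rw [Finset.sum_eq_add_of_mem 1 2 (Finset.mem_Icc.mpr ⟨by omega, by omega⟩)
                (Finset.mem_Icc.mpr ⟨by omega, by omega⟩) (by omega) (by
                  intro j hj hj'
                  have hjm := Finset.mem_Icc.mp hj
                  rw [hzero' 1 j (by omega) hjm.1 hjm.2 (by omega) (by omega) (by omega)]
                  norm_num)]
              rw [show I (P 1) (P 2) = 1 from hadj 1 (by omega), hd1]
              have hdet1 : d 2 = -((I (P 1) (P 1) : ℤ) : ℚ) := by
                simp only [hd]
                rw [if_neg (by omega)]
                rw [Matrix.det_fin_one]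
                simp [chainM]
              rw [hdet1]
              push_cast
              ring
            rw [hsum]
            ring
          · -- 2 ≤ t < s
            have hsum : ∑ j ∈ Finset.Icc 1 s, (I (P t) (P j) : ℚ) * d j = 0 := by
              have hsub : ({t-1, t, t+1} : Finset ℕ) ⊆ Finset.Icc 1 s := by
                intro x hx
                simp only [Finset.mem_insert, Finset.mem_singleton] at hx
                rcases hx with rfl | rfl | rfl <;>
                  exact Finset.mem_Icc.mpr ⟨by omega, by omega⟩
              rw [← Finset.sum_subset hsub (by
                intro x hx hnx
                simp only [Finset.mem_insert, Finset.mem_singleton] at hnx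
                push_neg at hnx
                have hxm := Finset.mem_Icc.mp hx
                rw [hzero' t x (by omega) hxm.1 hxm.2 (by omega) (by omega) (by omega)]
                norm_num)]
              rw [Finset.sum_insert (by
                  simp only [Finset.mem_insert, Finset.mem_singleton]
                  push_neg
                  omega),
                Finset.sum_insert (by
                  simp only [Finset.mem_singleton]
                  omega), Finset.sum_singleton]
              have ht1 : t - 1 + 1 = t := by omega
              have had1 : I (P t) (P (t-1)) = 1 := by
                have h := hadj2 (t-1) (by omega)
                rw [ht1] at h
                exact h
              have had2 : I (P t) (P (t+1)) = 1 := hadj t htlt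
              have hdm : d (t-1) = (chainM I P (t-2)).det := by
                simp only [hd]
                rw [if_neg (by omega)]
                rfl
              have hdt : d t = (chainM I P (t-1)).det := by
                simp only [hd]
                rw [if_neg (by omega)]
              have hdp : d (t+1) = (chainM I P t).det := by
                simp only [hd]
                rw [if_neg (by omega)]
                rfl
              have hr := hrec (t-2) (by omega)
              have e2 : t - 2 + 2 = t := by omega
              have e1 : t - 2 + 1 = t - 1 := by omega
              rw [e2, e1] at hr
              rw [had1, had2, hdm, hdt, hdp, hr]
              push_cast
              ring
            rw [hsum]
            ring
        · -- t = s : the end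
          have hts' : t = s := by omega
          subst hts'
          have hifnd : (if nd = P t then (1:ℚ) else 0) = 0 := by
            rw [if_neg]
            intro h
            rw [← hp0] at h
            have := hPinj (by omega) (by omega) h
            omega
          have hife : (if e = P t then (1:ℚ) else 0) = 1 := by
            rw [if_pos (by rw [hps])]
          rw [hifnd, hife]
          rcases Nat.lt_or_ge t 2 with ht1' | ht2
          · -- s = 1
            have ht : t = 1 := by omega
            have hsum : ∑ j ∈ Finset.Icc 1 t, (I (P t) (P j) : ℚ) * d j
                = ((I (P 1) (P 1) : ℤ) : ℚ) := by
              rw [ht]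
              rw [Finset.sum_eq_single 1]
              · rw [hd1]
                ring
              · intro j hj hj1
                have hj' := Finset.mem_Icc.mp hj
                rw [hzero' 1 j (by omega) hj'.1 (by omega) (by omega) (by
                  omega) (by omega)]
                norm_num
              · intro h
                exact absurd (Finset.mem_Icc.mpr ⟨le_refl 1, by omega⟩) h
            rw [hsum]
            have hca : α = -((I (P 1) (P 1) : ℤ) : ℚ) := by
              have h' := hα'
              rw [ht] at h'
              rw [h', Matrix.det_fin_one]
              simp [chainM]
            rw [hca]
            ring
          · -- s ≥ 2
            have hsum : ∑ j ∈ Finset.Icc 1 t, (I (P t) (P j) : ℚ) * d j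
                = -(chainM I P t).det := by
              rw [Finset.sum_eq_add_of_mem (t-1) t
                (Finset.mem_Icc.mpr ⟨by omega, by omega⟩)
                (Finset.mem_Icc.mpr ⟨by omega, by omega⟩) (by omega) (by
                  intro j hj hj'
                  have hjm := Finset.mem_Icc.mp hj
                  rw [hzero' t j (by omega) hjm.1 hjm.2 (by omega) (by omega) (by omega)]
                  norm_num)]
              have ht1 : t - 1 + 1 = t := by omega
              have had1 : I (P t) (P (t-1)) = 1 := by
                have h := hadj2 (t-1) (by omega)
                rw [ht1] at h
                exact h
              have hdm : d (t-1) = (chainM I P (t-2)).det := by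
                simp only [hd]
                rw [if_neg (by omega)]
                rfl
              have hdt : d t = (chainM I P (t-1)).det := by
                simp only [hd]
                rw [if_neg (by omega)]
              have hr := hrec (t-2) (by omega)
              have e2 : t - 2 + 2 = t := by omega
              have e1 : t - 2 + 1 = t - 1 := by omega
              rw [e2, e1] at hr
              rw [had1, hdm, hdt, hr]
              push_cast
              ring
            rw [hsum, ← hα']
            ring
    · -- off the leg
      push_neg at hw
      have hsum : ∑ j ∈ Finset.Icc 1 s, (I w (P j) : ℚ) * d j = 0 := by
        refine Finset.sum_eq_zero fun j hj => ?_
        have hj' := Finset.mem_Icc.mp hj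
        have hIwj : I w (P j) = 0 := by
          by_contra hne
          have hIw : I (P j) w ≠ 0 := by
            rw [hsym.apply w (P j)]
            exact hne
          rcases nbrP I e s P hsym hdege hs1 hps hdeg2 hadj hinjF j w hj'.1 hj'.2
            (hw j (by omega)) hIw with h | h
          · exact hw (j-1) (by omega) h
          · exact hw (j+1) (by omega) h.2
        rw [hIwj]
        norm_num
      rw [hsum, if_neg (by
        intro h
        exact hw 0 (by omega) (by rw [← h, hp0])), if_neg (by
        intro h
        exact hw s le_rfl (by rw [← h, hps]))]
      ring
  -- D agrees with y
  have HD : ∀ w, ∑ u, (I w u : ℚ) * Dv u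
      = (if nd = w then 1 else 0) - α * (if e = w then 1 else 0) := by
    intro w
    rw [hDv]
    have expand : ∑ u, (I w u : ℚ) * (α * Estar e u - Estar nd u)
        = α * ∑ u, (I w u : ℚ) * Estar e u - ∑ u, (I w u : ℚ) * Estar nd u := by
      rw [Finset.mul_sum, ← Finset.sum_sub_distrib]
      exact Finset.sum_congr rfl fun u _ => by ring
    rw [expand, hEstar e w, hEstar nd w]
    split_ifs <;> ring
  have hDy : Dv = y := by
    have h0 : ∀ v, (Dv v - y v) * (∑ u, (I v u : ℚ) * (Dv u - y u)) = 0 := by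
      intro v
      have hz : ∑ u, (I v u : ℚ) * (Dv u - y u) = 0 := by
        have hsplit : ∑ u, (I v u : ℚ) * (Dv u - y u)
            = (∑ u, (I v u : ℚ) * Dv u) - ∑ u, (I v u : ℚ) * y u := by
          rw [← Finset.sum_sub_distrib]
          exact Finset.sum_congr rfl fun u _ => by ring
        rw [hsplit, HD v, Hy v]
        ring
      rw [hz, mul_zero]
    have hfn := qf_zero I hnegdef (fun v => Dv v - y v) h0
    funext v
    have hv := congrFun hfn v
    simp only [Pi.zero_apply] at hv
    linarith [hv]
  refine ⟨?_, ?_, ?_, ?_, hαpos⟩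
  · intro v
    by_cases hv : ∃ j, 1 ≤ j ∧ j ≤ s ∧ v = P j
    · obtain ⟨j, h1, h2, rfl⟩ := hv
      obtain ⟨m, hm⟩ := hChint (j-1)
      refine ⟨m, ?_⟩
      rw [hDy, hyP j h1 h2]
      simp only [hd]
      rw [if_neg (by omega)]
      exact hm
    · push_neg at hv
      refine ⟨0, ?_⟩
      rw [hDy, hyoff v (fun j hj1 hj2 h => hv j hj1 hj2 h)]
      norm_num
  · intro v hv
    obtain ⟨j, h1, h2, rfl⟩ := hv
    rw [hDy, hyP j h1 h2]
    simp only [hd]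
    rw [if_neg (by omega)]
    exact hChpos (j-1) (by omega)
  · intro v hv
    push_neg at hv
    rw [hDy, hyoff v (fun j hj1 hj2 h => hv j hj1 hj2 h)]
  · rw [hDy, hyP 1 le_rfl hs1, hd1]

lemma legdisj {V : Type*} [Fintype V] [DecidableEq V]
    (I : Matrix V V ℤ) (hsym : I.IsSymm)
    (e nd : V) (s : ℕ) (P : ℕ → V)
    (hdege : degG I e = 1) (hs1 : 1 ≤ s) (hp0 : P 0 = nd) (hps : P s = e)
    (hnd3 : 3 ≤ degG I nd)
    (hdeg2 : ∀ j, 1 ≤ j → j < s → degG I (P j) = 2)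
    (hadj : ∀ j < s, I (P j) (P (j+1)) = 1)
    (hinjF : Function.Injective fun j : Fin (s+1) => P j)
    (e' nd' : V) (s' : ℕ) (P' : ℕ → V)
    (hdege' : degG I e' = 1) (hs1' : 1 ≤ s') (hp0' : P' 0 = nd') (hps' : P' s' = e')
    (hnd3' : 3 ≤ degG I nd')
    (hdeg2' : ∀ j, 1 ≤ j → j < s' → degG I (P' j) = 2)
    (hadj' : ∀ j < s', I (P' j) (P' (j+1)) = 1)
    (hinjF' : Function.Injective fun j : Fin (s'+1) => P' j) :
    ∀ j j', 1 ≤ j → j ≤ s → 1 ≤ j' → j' ≤ s' → P j = P' j' → e = e' := by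
  suffices H : ∀ k j, j + k = s → 1 ≤ j → ∀ j', 1 ≤ j' → j' ≤ s' → P j = P' j' → e = e' by
    intro j j' h1 h2 h3 h4 h5
    exact H (s - j) j (by omega) h1 j' h3 h4 h5
  intro k
  induction k with
  | zero =>
    intro j hjk hj1 j' hj1' hjs' hP
    have hj : j = s := by omega
    rw [hj, hps] at hP
    rcases Nat.lt_or_ge j' s' with h | h
    · exfalso
      have hd2 := hdeg2' j' hj1' h
      rw [← hP] at hd2
      rw [hdege] at hd2
      exact absurd hd2 (by omega)
    · have hj'eq : j' = s' := by omega
      rw [hj'eq, hps'] at hP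
      exact hP
  | succ n ih =>
    intro j hjk hj1 j' hj1' hjs' hP
    have hjlt : j < s := by omega
    have hdg : degG I (P j) = 2 := hdeg2 j hj1 hjlt
    have hj's : j' < s' := by
      by_contra h
      have hj'eq : j' = s' := by omega
      rw [hj'eq, hps'] at hP
      have hh := hdege'
      rw [← hP] at hh
      rw [hdg] at hh
      exact absurd hh (by omega)
    have hne1 : P (j-1) ≠ P j := by
      intro h
      have := Pinj s P hinjF (by omega) (by omega) h
      omega
    have hI1 : I (P j) (P (j-1)) ≠ 0 := by
      have h1 : I (P (j-1)) (P (j-1+1)) = 1 := hadj (j-1) (by omega)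
      rw [show j-1+1 = j from by omega] at h1
      rw [hsym.apply, h1]
      exact one_ne_zero
    have hne2 : P (j+1) ≠ P j := by
      intro h
      have := Pinj s P hinjF (by omega) (by omega) h
      omega
    have hI2 : I (P j) (P (j+1)) ≠ 0 := by
      rw [hadj j hjlt]
      exact one_ne_zero
    have hne12 : P (j-1) ≠ P (j+1) := by
      intro h
      have := Pinj s P hinjF (by omega) (by omega) h
      omega
    have hc1a : P' (j'+1) ≠ P j := by
      intro h
      rw [hP] at h
      have := Pinj s' P' hinjF' (by omega) (by omega) h
      omega
    have hc1b : I (P j) (P' (j'+1)) ≠ 0 := by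
      rw [hP, hadj' j' hj's]
      exact one_ne_zero
    have hc2a : P' (j'-1) ≠ P j := by
      intro h
      rw [hP] at h
      have := Pinj s' P' hinjF' (by omega) (by omega) h
      omega
    have hc2b : I (P j) (P' (j'-1)) ≠ 0 := by
      rw [hP]
      have h1 : I (P' (j'-1)) (P' (j'-1+1)) = 1 := hadj' (j'-1) (by omega)
      rw [show j'-1+1 = j' from by omega] at h1
      rw [hsym.apply, h1]
      exact one_ne_zero
    have hcl1 := nbr_deg2 I hdg hne1 hI1 hne2 hI2 hne12 hc1a hc1b
    have hcl2 := nbr_deg2 I hdg hne1 hI1 hne2 hI2 hne12 hc2a hc2b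
    have hc12 : P' (j'+1) ≠ P' (j'-1) := by
      intro h
      have := Pinj s' P' hinjF' (by omega) (by omega) h
      omega
    have key : (∃ m, 1 ≤ m ∧ m ≤ s' ∧ P (j+1) = P' m) ∨ P (j+1) = P' 0 := by
      rcases hcl1 with h1 | h1
      · rcases hcl2 with h2 | h2
        · exact absurd (h1.trans h2.symm) hc12
        · rcases Nat.eq_zero_or_pos (j'-1) with hz | hpos
          · right
            rw [← h2, hz]
          · left
            exact ⟨j'-1, hpos, by omega, h2.symm⟩
      · left
        exact ⟨j'+1, by omega, by omega, h1.symm⟩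
    rcases key with ⟨m, hm1, hm2, hm⟩ | h0
    · exact ih (j+1) (by omega) (by omega) m hm1 hm2 hm
    · exfalso
      rw [hp0'] at h0
      have h3 : 3 ≤ degG I (P (j+1)) := by
        rw [h0]
        exact hnd3'
      rcases Nat.lt_or_ge (j+1) s with hlt | hge
      · have := hdeg2 (j+1) (by omega) hlt
        omega
      · have hj1s : j+1 = s := by omega
        rw [hj1s, hps] at h3
        rw [hdege] at h3
        exact absurd h3 (by omega)

end Stmt17Aux

/-- Leg cycles `D_e = α_e E_e^* - E_{n_e}^*`.  Let `G` be a connected negative definite tree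
(so the plumbed manifold is a rational homology sphere), with nodes `𝒩 = {δ ≥ 3}` and ends
`ℰ = {δ = 1}`.  For an end `e`, let `n_e = nd e` be its node and `p_e 0 = n_e, …, p_e (s_e) = e`
the leg joining them (interior vertices of valency `2`); `α_e` is the determinant of the leg
(the numerator of the negative continued fraction `α_e/β_e` of its self-intersections), and
`E_v^*` is defined by `(E_v^*, E_w) = -δ_{vw}`.  Then `D_e` is an effective integral cycle
supported exactly on the leg, with multiplicity `1` at the neighbour `u_e = p_e 1` of `n_e`;
moreover the family `(D_e)_{e ∈ ℰ}` is a `ℤ`-basis of the kernel of the restriction map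
`V_Z → V_Z^𝒩`, where `V_Z = ℤ⟨E_v^* : v ∈ 𝒩 ∪ ℰ⟩ ∩ L`. -/
theorem stmt17 {V : Type*} [Fintype V] [DecidableEq V]
    (I : Matrix V V ℤ)
    (hsym : I.IsSymm)
    (hdiag : ∀ v : V, I v v < 0)
    (hoff : ∀ v w : V, v ≠ w → I v w = 0 ∨ I v w = 1)
    (hnegdef : ∀ x : V → ℚ, x ≠ 0 → ∑ v, ∑ w, x v * (I v w : ℚ) * x w < 0)
    (hconn : ∀ v w : V, Relation.ReflTransGen (fun a b : V => a ≠ b ∧ I a b ≠ 0) v w)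
    (htree : ∑ q ∈ (Finset.univ : Finset (V × V)).filter (fun q => q.1 ≠ q.2), I q.1 q.2
      = 2 * ((Fintype.card V : ℤ) - 1))
    (hnode : ∃ v, 3 ≤ degG I v)
    -- the dual cycles `E_v^*`:
    (Estar : V → V → ℚ)
    (hEstar : ∀ v w, ∑ u, (I w u : ℚ) * Estar v u = if v = w then -1 else 0)
    -- the leg attached to each end `e`: node `nd e`, length `s e`, path `p e`:
    (nd : V → V) (s : V → ℕ) (p : V → ℕ → V)
    (hleg : ∀ e, degG I e = 1 →
      1 ≤ s e ∧ p e 0 = nd e ∧ p e (s e) = e ∧ 3 ≤ degG I (nd e) ∧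
      (∀ j, 1 ≤ j → j < s e → degG I (p e j) = 2) ∧
      (∀ j < s e, I (p e j) (p e (j + 1)) = 1) ∧
      Function.Injective (fun j : Fin (s e + 1) => p e j))
    -- `α_e` = (absolute value of the) determinant of the leg:
    (α : V → ℚ)
    (hα : ∀ e, degG I e = 1 →
      α e = |Matrix.det (Matrix.of fun i j : Fin (s e) =>
        ((I (p e (i.1 + 1)) (p e (j.1 + 1)) : ℤ) : ℚ))|)
    -- the cycles `D_e = α_e E_e^* - E_{n_e}^*`:
    (D : V → V → ℚ)
    (hD : ∀ e, D e = fun v => α e * Estar e v - Estar (nd e) v) :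
    (∀ e, degG I e = 1 →
      (∀ v, ∃ m : ℤ, D e v = (m : ℚ)) ∧
      (∀ v, (∃ j, 1 ≤ j ∧ j ≤ s e ∧ v = p e j) → 0 < D e v) ∧
      (∀ v, (¬ ∃ j, 1 ≤ j ∧ j ≤ s e ∧ v = p e j) → D e v = 0) ∧
      D e (p e 1) = 1) ∧
    (∀ x : V → ℚ,
      (∀ v, ∃ m : ℤ, x v = (m : ℚ)) →
      (∃ cf : V → ℤ, x = fun v =>
        ∑ u ∈ Finset.univ.filter (fun u => 3 ≤ degG I u ∨ degG I u = 1),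
          (cf u : ℚ) * Estar u v) →
      (∀ nn, 3 ≤ degG I nn → x nn = 0) →
      ∃! k : {e : V // degG I e = 1} → ℤ,
        x = fun v => ∑ e : {e : V // degG I e = 1}, (k e : ℚ) * D e.1 v) := by
  have hinfo : ∀ (e : V) (he : degG I e = 1),
      (∀ v, ∃ m : ℤ, D e v = (m : ℚ)) ∧
      (∀ v, (∃ j, 1 ≤ j ∧ j ≤ s e ∧ v = p e j) → 0 < D e v) ∧
      (∀ v, (¬ ∃ j, 1 ≤ j ∧ j ≤ s e ∧ v = p e j) → D e v = 0) ∧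
      D e (p e 1) = 1 ∧ 0 < α e := by
    intro e he
    obtain ⟨hs1, hp0, hps, hnd3, hdeg2, hadj, hinjF⟩ := hleg e he
    exact Stmt17Aux.part1 I hsym hnegdef Estar hEstar e (nd e) (s e) (p e) he hs1 hp0 hps
      hnd3 hdeg2 hadj hinjF (α e) (hα e he) (D e) (hD e)
  refine ⟨fun e he => ⟨(hinfo e he).1, (hinfo e he).2.1, (hinfo e he).2.2.1,
    (hinfo e he).2.2.2.1⟩, ?_⟩
  intro x hint hspan hnodes
  obtain ⟨cf, hxrep⟩ := hspan
  -- the intersection of `D e` with the basis cycles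
  have HDe : ∀ (e : V), degG I e = 1 → ∀ w, ∑ u, (I w u : ℚ) * D e u
      = (if nd e = w then 1 else 0) - α e * (if e = w then 1 else 0) := by
    intro e he w
    rw [hD e]
    have expand : ∑ u, (I w u : ℚ) * (α e * Estar e u - Estar (nd e) u)
        = α e * ∑ u, (I w u : ℚ) * Estar e u - ∑ u, (I w u : ℚ) * Estar (nd e) u := by
      rw [Finset.mul_sum, ← Finset.sum_sub_distrib]
      exact Finset.sum_congr rfl fun u _ => by ring
    rw [expand, hEstar e w, hEstar (nd e) w]
    split_ifs <;> ring
  -- D e vanishes at nodes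
  have Dnode : ∀ (e : V) (he : degG I e = 1) (v : V), 3 ≤ degG I v → D e v = 0 := by
    intro e he v hv
    refine (hinfo e he).2.2.1 v ?_
    rintro ⟨j, hj1, hjs, rfl⟩
    obtain ⟨hs1, hp0, hps, hnd3, hdeg2, hadj, hinjF⟩ := hleg e he
    rcases Nat.lt_or_ge j (s e) with h | h
    · have := hdeg2 j hj1 h
      omega
    · have hj : j = s e := by omega
      rw [hj, hps] at hv
      rw [he] at hv
      exact absurd hv (by omega)
  -- the intersection of x with the basis cycles
  have key2 : ∀ v, ∑ w, (I v w : ℚ) * x w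
      = if (3 ≤ degG I v ∨ degG I v = 1) then -(cf v : ℚ) else 0 := by
    intro v
    simp only [hxrep]
    calc ∑ w, (I v w : ℚ) * ∑ u ∈ Finset.univ.filter
          (fun u => 3 ≤ degG I u ∨ degG I u = 1), (cf u : ℚ) * Estar u w
        = ∑ w, ∑ u ∈ Finset.univ.filter (fun u => 3 ≤ degG I u ∨ degG I u = 1),
            (cf u : ℚ) * ((I v w : ℚ) * Estar u w) := by
          refine Finset.sum_congr rfl fun w _ => ?_
          rw [Finset.mul_sum]
          exact Finset.sum_congr rfl fun u _ => by ring
      _ = ∑ u ∈ Finset.univ.filter (fun u => 3 ≤ degG I u ∨ degG I u = 1),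
            ∑ w, (cf u : ℚ) * ((I v w : ℚ) * Estar u w) := Finset.sum_comm
      _ = ∑ u ∈ Finset.univ.filter (fun u => 3 ≤ degG I u ∨ degG I u = 1),
            (cf u : ℚ) * (if u = v then -1 else 0) := by
          refine Finset.sum_congr rfl fun u _ => ?_
          rw [← Finset.mul_sum, hEstar u v]
      _ = ∑ u ∈ Finset.univ.filter (fun u => 3 ≤ degG I u ∨ degG I u = 1),
            (if u = v then -(cf u : ℚ) else 0) := by
          refine Finset.sum_congr rfl fun u _ => ?_
          split <;> ring
      _ = if (3 ≤ degG I v ∨ degG I v = 1) then -(cf v : ℚ) else 0 := by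
          rw [Finset.sum_ite_eq' (Finset.univ.filter
            (fun u => 3 ≤ degG I u ∨ degG I u = 1)) v (fun u => -(cf u : ℚ))]
          simp [Finset.mem_filter]
  set q : {e : V // degG I e = 1} → ℚ := fun e => (cf e.1 : ℚ) / α e.1 with hq
  set u : V → ℚ := fun v => x v - ∑ e : {e : V // degG I e = 1}, q e * D e.1 v with hu
  have keyD : ∀ (c : {e : V // degG I e = 1} → ℚ) (v : V),
      ∑ w, (I v w : ℚ) * (∑ e : {e : V // degG I e = 1}, c e * D e.1 w)
      = ∑ e : {e : V // degG I e = 1},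
          c e * ((if nd e.1 = v then 1 else 0) - α e.1 * (if e.1 = v then 1 else 0)) := by
    intro c v
    calc ∑ w, (I v w : ℚ) * (∑ e : {e : V // degG I e = 1}, c e * D e.1 w)
        = ∑ w, ∑ e : {e : V // degG I e = 1}, c e * ((I v w : ℚ) * D e.1 w) := by
          refine Finset.sum_congr rfl fun w _ => ?_
          rw [Finset.mul_sum]
          exact Finset.sum_congr rfl fun e _ => by ring
      _ = ∑ e : {e : V // degG I e = 1}, ∑ w, c e * ((I v w : ℚ) * D e.1 w) :=
          Finset.sum_comm
      _ = ∑ e : {e : V // degG I e = 1},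
            c e * ((if nd e.1 = v then 1 else 0) - α e.1 * (if e.1 = v then 1 else 0)) := by
          refine Finset.sum_congr rfl fun e _ => ?_
          rw [← Finset.mul_sum, HDe e.1 e.2 v]
  have hIu : ∀ v, ¬ (3 ≤ degG I v) → ∑ w, (I v w : ℚ) * u w = 0 := by
    intro v hv
    have hsplit : ∑ w, (I v w : ℚ) * u w
        = (∑ w, (I v w : ℚ) * x w)
          - ∑ w, (I v w : ℚ) * (∑ e : {e : V // degG I e = 1}, q e * D e.1 w) := by
      simp only [hu]
      rw [← Finset.sum_sub_distrib]
      exact Finset.sum_congr rfl fun w _ => by ring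
    rw [hsplit, key2 v, keyD q v]
    have hnd0 : ∀ e : {e : V // degG I e = 1}, (if nd e.1 = v then (1:ℚ) else 0) = 0 := by
      intro e
      rw [if_neg]
      intro h
      obtain ⟨_, _, _, hnd3, _⟩ := hleg e.1 e.2
      rw [h] at hnd3
      exact hv hnd3
    have hsum : ∑ e : {e : V // degG I e = 1},
        q e * ((if nd e.1 = v then (1:ℚ) else 0) - α e.1 * (if e.1 = v then 1 else 0))
        = -(∑ e : {e : V // degG I e = 1}, q e * α e.1 * (if e.1 = v then (1:ℚ) else 0)) := by
      rw [← Finset.sum_neg_distrib]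
      refine Finset.sum_congr rfl fun e _ => ?_
      rw [hnd0 e]
      ring
    rw [hsum]
    by_cases hv1 : degG I v = 1
    · have hterm : ∑ e : {e : V // degG I e = 1},
          q e * α e.1 * (if e.1 = v then (1:ℚ) else 0) = (cf v : ℚ) := by
        rw [Finset.sum_eq_single (⟨v, hv1⟩ : {e : V // degG I e = 1})]
        · rw [if_pos rfl]
          simp only [hq]
          rw [div_mul_cancel₀ _ (ne_of_gt (hinfo v hv1).2.2.2.2)]
          ring
        · intro e _ hne
          rw [if_neg (fun h => hne (Subtype.ext h))]
          ring
        · intro h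
          exact absurd (Finset.mem_univ _) h
      rw [hterm, if_pos (Or.inr hv1)]
      ring
    · have hterm : ∑ e : {e : V // degG I e = 1},
          q e * α e.1 * (if e.1 = v then (1:ℚ) else 0) = 0 := by
        refine Finset.sum_eq_zero fun e _ => ?_
        rw [if_neg (fun h : e.1 = v => hv1 (h ▸ e.2))]
        ring
      rw [hterm, if_neg (by rintro (h | h); exacts [hv h, hv1 h])]
      ring
  have hunode : ∀ v, 3 ≤ degG I v → u v = 0 := by
    intro v hv
    simp only [hu]
    rw [hnodes v hv]
    have hterm : ∑ e : {e : V // degG I e = 1}, q e * D e.1 v = 0 := by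
      refine Finset.sum_eq_zero fun e _ => ?_
      rw [Dnode e.1 e.2 v hv]
      ring
    rw [hterm]
    ring
  have hu0 : u = 0 := by
    refine Stmt17Aux.qf_zero I hnegdef u (fun v => ?_)
    by_cases h : 3 ≤ degG I v
    · rw [hunode v h, zero_mul]
    · rw [hIu v h, mul_zero]
  have hxq : ∀ v, x v = ∑ e : {e : V // degG I e = 1}, q e * D e.1 v := by
    intro v
    have hv := congrFun hu0 v
    simp only [hu, Pi.zero_apply] at hv
    linarith
  -- evaluation at the first leg vertex determines the coefficients
  have eval : ∀ (c : {e : V // degG I e = 1} → ℚ),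
      (∀ v, x v = ∑ e : {e : V // degG I e = 1}, c e * D e.1 v) →
      ∀ e₀ : {e : V // degG I e = 1}, x (p e₀.1 1) = c e₀ := by
    intro c hc e₀
    rw [hc (p e₀.1 1)]
    rw [Finset.sum_eq_single e₀]
    · rw [(hinfo e₀.1 e₀.2).2.2.2.1]
      ring
    · intro e _ hne
      have hD0 : D e.1 (p e₀.1 1) = 0 := by
        refine (hinfo e.1 e.2).2.2.1 _ ?_
        rintro ⟨j, hj1, hjs, hPj⟩
        obtain ⟨hs1, hp0, hps, hnd3, hdeg2, hadj, hinjF⟩ := hleg e.1 e.2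
        obtain ⟨hs1', hp0', hps', hnd3', hdeg2', hadj', hinjF'⟩ := hleg e₀.1 e₀.2
        have heq := Stmt17Aux.legdisj I hsym e.1 (nd e.1) (s e.1) (p e.1) e.2 hs1 hp0 hps
          hnd3 hdeg2 hadj hinjF e₀.1 (nd e₀.1) (s e₀.1) (p e₀.1) e₀.2 hs1' hp0' hps'
          hnd3' hdeg2' hadj' hinjF' j 1 hj1 hjs le_rfl hs1' hPj.symm
        exact hne (Subtype.ext heq)
      rw [hD0]
      ring
    · intro h
      exact absurd (Finset.mem_univ _) h
  have hqeval : ∀ e₀ : {e : V // degG I e = 1}, x (p e₀.1 1) = q e₀ := eval q hxq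
  set k : {e : V // degG I e = 1} → ℤ := fun e => Classical.choose (hint (p e.1 1)) with hk
  have hkc : ∀ e : {e : V // degG I e = 1}, (k e : ℚ) = x (p e.1 1) := by
    intro e
    exact (Classical.choose_spec (hint (p e.1 1))).symm
  refine ⟨k, ?_, ?_⟩
  · funext v
    rw [hxq v]
    refine Finset.sum_congr rfl fun e _ => ?_
    rw [hkc e, hqeval e]
  · intro k' hk'
    funext e
    have h1 : x (p e.1 1) = (k' e : ℚ) :=
      eval (fun e => (k' e : ℚ)) (fun v => congrFun hk' v) e
    have h2 : (k e : ℚ) = (k' e : ℚ) := by rw [hkc e, h1]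
    exact_mod_cast h2.symm
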